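/- arXiv:1712.02103 — 2 statements merged into one kernel-verified Lean document; each statement's English description precedes it below -/
import Mathlib

section
/- Let S be a nonempty finite jobset and let σ be any permutation of S, written σ = π₀ ++ [k] for its last job k. Then there exists a permutation π of S \ {k} that is non-dominated among permutations of S \ {k} and satisfies C_2(π ++ [k]) ≤ C_2(σ) and C_3(π ++ [k]) ≤ C_3(σ). -/
/-- Machine completion times `(C₁, C₂, C₃)` of a job sequence in a
three-machine flowshop with processing times `p i j`. -/
def flowComp (p : ℕ → Fin 3 → ℕ) (π : List ℕ) : ℕ × ℕ × ℕ :=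
  π.foldl (fun c i =>
    let c1 := c.1 + p i 0
    let c2 := max c.2.1 c1 + p i 1
    let c3 := max c.2.2 c2 + p i 2
    (c1, c2, c3)) (0, 0, 0)

/-- Completion time on machine 2. -/
def C2 (p : ℕ → Fin 3 → ℕ) (π : List ℕ) : ℕ := (flowComp p π).2.1

/-- Completion time on machine 3. -/
def C3 (p : ℕ → Fin 3 → ℕ) (π : List ℕ) : ℕ := (flowComp p π).2.2

/-- `π` is a permutation of the finite jobset `S`: it lists each element
of `S` exactly once. -/
def IsPermOf (π : List ℕ) (S : Finset ℕ) : Prop :=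
  π.Nodup ∧ ∀ x, x ∈ π ↔ x ∈ S

/-- `π` is non-dominated among the permutations of `S'`: no permutation `π''`
of `S'` satisfies `C₂(π'') ≤ C₂(π)`, `C₃(π'') ≤ C₃(π)` with
`(C₂(π''), C₃(π'')) ≠ (C₂(π), C₃(π))`. -/
def NonDominated (p : ℕ → Fin 3 → ℕ) (π : List ℕ) (S' : Finset ℕ) : Prop :=
  ¬ ∃ π'' : List ℕ, IsPermOf π'' S' ∧ C2 p π'' ≤ C2 p π ∧ C3 p π'' ≤ C3 p π ∧
      (C2 p π'', C3 p π'') ≠ (C2 p π, C3 p π)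

lemma flowComp_append (p : ℕ → Fin 3 → ℕ) (π : List ℕ) (k : ℕ) :
    flowComp p (π ++ [k]) =
      let c := flowComp p π
      ((c.1 + p k 0, max c.2.1 (c.1 + p k 0) + p k 1,
        max c.2.2 (max c.2.1 (c.1 + p k 0) + p k 1) + p k 2)) := by
  simp [flowComp, List.foldl_append]

lemma flowComp_fst (p : ℕ → Fin 3 → ℕ) (π : List ℕ) :
    (flowComp p π).1 = (π.map (fun i => p i 0)).sum := by
  suffices h : ∀ (c : ℕ × ℕ × ℕ), (π.foldl (fun c i =>
      let c1 := c.1 + p i 0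
      let c2 := max c.2.1 c1 + p i 1
      let c3 := max c.2.2 c2 + p i 2
      (c1, c2, c3)) c).1 = c.1 + (π.map (fun i => p i 0)).sum by
    simpa [flowComp] using h (0,0,0)
  induction π with
  | nil => simp
  | cons a t ih => intro c; simp [ih]; ring

lemma exists_nd (p : ℕ → Fin 3 → ℕ) (S' : Finset ℕ) :
    ∀ n (π₀ : List ℕ), IsPermOf π₀ S' → C2 p π₀ + C3 p π₀ ≤ n →
    ∃ π, IsPermOf π S' ∧ NonDominated p π S' ∧ C2 p π ≤ C2 p π₀ ∧ C3 p π ≤ C3 p π₀ := by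
  intro n
  induction n using Nat.strong_induction_on with
  | _ n ih =>
    intro π₀ hperm hle
    by_cases hnd : NonDominated p π₀ S'
    · exact ⟨π₀, hperm, hnd, le_rfl, le_rfl⟩
    · rw [NonDominated, not_not] at hnd
      obtain ⟨π'', hp'', h2, h3, hne⟩ := hnd
      have hlt : C2 p π'' + C3 p π'' < C2 p π₀ + C3 p π₀ := by
        rcases lt_or_eq_of_le h2 with h | h
        · omega
        · rcases lt_or_eq_of_le h3 with h' | h'
          · omega
          · exact absurd (by rw [h, h']) hne
      have hn : C2 p π'' + C3 p π'' < n := lt_of_lt_of_le hlt hle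
      obtain ⟨π, a, b, c, d⟩ := ih (C2 p π'' + C3 p π'') hn π'' hp'' le_rfl
      exact ⟨π, a, b, c.trans h2, d.trans h3⟩

theorem stmt_8 (p : ℕ → Fin 3 → ℕ) (S : Finset ℕ) (hS : S.Nonempty)
    (σ π₀ : List ℕ) (k : ℕ) (hσ : IsPermOf σ S) (hsplit : σ = π₀ ++ [k]) :
    ∃ π : List ℕ, IsPermOf π (S \ {k}) ∧ NonDominated p π (S \ {k}) ∧
      C2 p (π ++ [k]) ≤ C2 p σ ∧ C3 p (π ++ [k]) ≤ C3 p σ := by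
  obtain ⟨hnd, hmem⟩ := hσ
  subst hsplit
  have hnd₀ : π₀.Nodup := (List.nodup_append.mp hnd).1
  have hknot : k ∉ π₀ := by
    have := List.nodup_append'.mp hnd
    intro hk; exact this.2.2 hk (List.mem_singleton_self k)
  have hperm₀ : IsPermOf π₀ (S \ {k}) := by
    refine ⟨hnd₀, fun x => ?_⟩
    simp only [Finset.mem_sdiff, Finset.mem_singleton]
    constructor
    · intro hx
      refine ⟨(hmem x).mp (by simp [hx]), ?_⟩
      rintro rfl; exact hknot hx
    · rintro ⟨hxS, hxk⟩
      have := (hmem x).mpr hxS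
      simp [List.mem_append] at this
      tauto
  obtain ⟨π, hπperm, hπnd, h2, h3⟩ :=
    exists_nd p (S \ {k}) (C2 p π₀ + C3 p π₀) π₀ hperm₀ le_rfl
  refine ⟨π, hπperm, hπnd, ?_, ?_⟩
  all_goals {
    have h1 : (flowComp p π).1 = (flowComp p π₀).1 := by
      rw [flowComp_fst, flowComp_fst]
      have : π.Perm π₀ := (List.perm_ext_iff_of_nodup hπperm.1 hnd₀).mpr
        (fun a => (hπperm.2 a).trans (hperm₀.2 a).symm)
      exact (this.map _).sum_eq
    simp only [C2, C3, flowComp_append]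
    rw [h1]
    gcongr <;> first
      | exact h2
      | exact h3
  }
end

section
/- Let a_1, …, a_n be positive integers, let s = Σ_{i=1}^{n} a_i, and let t be an integer with 0 < t < s. Consider the three-machine flowshop instance with n+1 jobs: job 0 has processing times (t, t, s−t) on machines 1, 2, 3, and each job i with 1 ≤ i ≤ n has processing times (0, a_i, 0). Then there exists a subset I ⊆ {1, …, n} with Σ_{i∈I} a_i = t if and only if there exists a permutation π of all n+1 jobs with C_3(π) ≤ s + t. -/
/-- One step of the flowshop recursion. -/
def fstep (p : ℕ → Fin 3 → ℕ) (c : ℕ × ℕ × ℕ) (i : ℕ) : ℕ × ℕ × ℕ :=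
  let c1 := c.1 + p i 0
  let c2 := max c.2.1 c1 + p i 1
  let c3 := max c.2.2 c2 + p i 2
  (c1, c2, c3)

lemma flowComp_eq (p : ℕ → Fin 3 → ℕ) (π : List ℕ) :
    flowComp p π = π.foldl (fstep p) (0, 0, 0) := rfl

/-- Folding a block of jobs with processing times `(0, a i, 0)` from a sane state. -/
lemma ablock (p : ℕ → Fin 3 → ℕ) (a : ℕ → ℕ) (n : ℕ)
    (hpi : ∀ i ∈ Finset.Icc 1 n, p i 0 = 0 ∧ p i 1 = a i ∧ p i 2 = 0) :
    ∀ (L : List ℕ), (∀ i ∈ L, i ∈ Finset.Icc 1 n) → ∀ c : ℕ × ℕ × ℕ,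
      c.1 ≤ c.2.1 → c.2.1 ≤ c.2.2 →
      L.foldl (fstep p) c =
        (c.1, c.2.1 + (L.map a).sum, max c.2.2 (c.2.1 + (L.map a).sum)) := by
  intro L
  induction L with
  | nil =>
    intro _ c h1 h2
    simp only [List.foldl_nil, List.map_nil, List.sum_nil, Nat.add_zero]
    have : max c.2.2 c.2.1 = c.2.2 := by omega
    rw [this]
  | cons i L ih =>
    intro hL c h1 h2
    have hi := hpi i (hL i (by simp))
    have hstep : fstep p c i = (c.1, c.2.1 + a i, max c.2.2 (c.2.1 + a i)) := by
      have h1' : max c.2.1 c.1 = c.2.1 := by omega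
      simp only [fstep, hi.1, hi.2.1, hi.2.2, Nat.add_zero, h1']
    rw [List.foldl_cons, hstep,
      ih (fun j hj => hL j (by simp [hj])) _ (by dsimp only; omega) (by dsimp only; omega)]
    simp only [List.map_cons, List.sum_cons]
    have : max (max c.2.2 (c.2.1 + a i)) (c.2.1 + a i + (List.map a L).sum)
        = max c.2.2 (c.2.1 + (a i + (List.map a L).sum)) := by omega
    rw [this, Nat.add_assoc]

theorem stmt_14 (n : ℕ) (a : ℕ → ℕ) (ha : ∀ i ∈ Finset.Icc 1 n, 0 < a i)
    (s t : ℕ) (hs : s = ∑ i ∈ Finset.Icc 1 n, a i) (ht0 : 0 < t) (hts : t < s)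
    (p : ℕ → Fin 3 → ℕ)
    (hp0 : p 0 0 = t ∧ p 0 1 = t ∧ p 0 2 = s - t)
    (hpi : ∀ i ∈ Finset.Icc 1 n, p i 0 = 0 ∧ p i 1 = a i ∧ p i 2 = 0) :
    (∃ I : Finset ℕ, I ⊆ Finset.Icc 1 n ∧ ∑ i ∈ I, a i = t) ↔
      (∃ π : List ℕ, IsPermOf π (Finset.range (n + 1)) ∧ C3 p π ≤ s + t) := by
  have hts' : t ≤ s := le_of_lt hts
  constructor
  · -- forward: subset sum ⇒ schedule
    rintro ⟨I, hI, hsum⟩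
    set J : Finset ℕ := Finset.Icc 1 n \ I with hJdef
    have hJsum : ∑ i ∈ J, a i = s - t := by
      rw [hJdef]
      have := Finset.sum_sdiff (f := a) hI
      omega
    refine ⟨I.toList ++ 0 :: J.toList, ⟨?_, ?_⟩, ?_⟩
    · -- nodup
      refine List.Nodup.append I.nodup_toList ?_ ?_
      · refine List.Nodup.cons ?_ J.nodup_toList
        intro h0
        have : (0 : ℕ) ∈ J := Finset.mem_toList.mp h0
        have := Finset.mem_sdiff.mp this
        simp [Finset.mem_Icc] at this
      · intro x hxI hx
        have hxI' : x ∈ I := Finset.mem_toList.mp hxI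
        rcases List.mem_cons.mp hx with rfl | hxJ
        · have := Finset.mem_Icc.mp (hI hxI'); omega
        · have := (Finset.mem_sdiff.mp (Finset.mem_toList.mp hxJ)).2
          exact this hxI'
    · -- membership
      intro x
      simp only [List.mem_append, List.mem_cons, Finset.mem_toList, Finset.mem_range,
        hJdef, Finset.mem_sdiff, Finset.mem_Icc]
      constructor
      · rintro (hx | rfl | ⟨⟨h1, h2⟩, _⟩)
        · have := Finset.mem_Icc.mp (hI hx); omega
        · omega
        · omega
      · intro hx
        by_cases hx0 : x = 0
        · exact Or.inr (Or.inl hx0)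
        · by_cases hxI : x ∈ I
          · exact Or.inl hxI
          · exact Or.inr (Or.inr ⟨⟨by omega, by omega⟩, hxI⟩)
    · -- makespan
      have hIsub : ∀ i ∈ I.toList, i ∈ Finset.Icc 1 n := fun i hi =>
        hI (Finset.mem_toList.mp hi)
      have hJsub : ∀ i ∈ J.toList, i ∈ Finset.Icc 1 n := fun i hi =>
        (Finset.mem_sdiff.mp (Finset.mem_toList.mp hi)).1
      have hImap : (I.toList.map a).sum = t := by
        rw [Finset.sum_map_toList]; exact hsum
      have hJmap : (J.toList.map a).sum = s - t := by
        rw [Finset.sum_map_toList]; exact hJsum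
      have h1 : flowComp p I.toList = (0, t, t) := by
        rw [flowComp_eq, ablock p a n hpi I.toList hIsub (0,0,0) (by simp) (by simp)]
        simp [hImap]
      have h2 : fstep p (0, t, t) 0 = (t, 2 * t, s + t) := by
        simp only [fstep, hp0.1, hp0.2.1, hp0.2.2]
        have e1 : (0 : ℕ) + t = t := by omega
        have e2 : max t t + t = 2 * t := by omega
        have e3 : max t (2 * t) + (s - t) = s + t := by omega
        rw [e1, e2, e3]
      have h3 : C3 p (I.toList ++ 0 :: J.toList) = s + t := by
        unfold C3
        rw [flowComp_eq, List.foldl_append, List.foldl_cons, ← flowComp_eq, h1, h2,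
          ablock p a n hpi J.toList hJsub (t, 2*t, s+t) (by dsimp only; omega) (by dsimp only; omega)]
        simp only [hJmap]
        have : max (s + t) (2 * t + (s - t)) = s + t := by omega
        rw [this]
      omega
  · -- backward: schedule ⇒ subset sum
    rintro ⟨π, ⟨hnd, hmem⟩, hC3⟩
    have h0π : 0 ∈ π := (hmem 0).mpr (by simp)
    obtain ⟨A, B, rfl⟩ := List.append_of_mem h0π
    have hndA : A.Nodup := hnd.of_append_left
    have hnd0B : (0 :: B).Nodup := hnd.of_append_right
    have hndB : B.Nodup := hnd0B.of_cons
    have h0A : (0 : ℕ) ∉ A := fun h =>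
      (List.disjoint_of_nodup_append hnd) h (by simp)
    have h0B : (0 : ℕ) ∉ B := by
      have := List.nodup_cons.mp hnd0B; exact this.1
    have hAsub : ∀ i ∈ A, i ∈ Finset.Icc 1 n := by
      intro i hi
      have hi' : i ∈ Finset.range (n+1) := (hmem i).mp (by simp [hi])
      have : i ≠ 0 := fun h => h0A (h ▸ hi)
      simp only [Finset.mem_range] at hi'
      simp only [Finset.mem_Icc]; omega
    have hBsub : ∀ i ∈ B, i ∈ Finset.Icc 1 n := by
      intro i hi
      have hi' : i ∈ Finset.range (n+1) := (hmem i).mp (by simp [hi])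
      have : i ≠ 0 := fun h => h0B (h ▸ hi)
      simp only [Finset.mem_range] at hi'
      simp only [Finset.mem_Icc]; omega
    set u := (A.map a).sum with hu
    set v := (B.map a).sum with hv
    -- u + v = s
    have hdisj : Disjoint A.toFinset B.toFinset := by
      rw [List.disjoint_toFinset_iff_disjoint]
      intro x hxA hxB
      exact (List.disjoint_of_nodup_append hnd) hxA (by simp [hxB])
    have hunion : A.toFinset ∪ B.toFinset = Finset.Icc 1 n := by
      ext x
      simp only [Finset.mem_union, List.mem_toFinset]
      constructor
      · rintro (h | h)
        · exact hAsub x h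
        · exact hBsub x h
      · intro hx
        have hx1 : x ∈ Finset.Icc 1 n := hx
        simp only [Finset.mem_Icc] at hx1
        have : x ∈ A ++ 0 :: B := (hmem x).mpr (by simp [Finset.mem_range]; omega)
        rcases List.mem_append.mp this with h | h
        · exact Or.inl h
        · rcases List.mem_cons.mp h with h | h
          · omega
          · exact Or.inr h
    have huv : u + v = s := by
      have := Finset.sum_union (f := a) hdisj
      rw [hunion, List.sum_toFinset a hndA, List.sum_toFinset a hndB] at this
      omega
    -- compute C3
    have h1 : flowComp p A = (0, u, u) := by
      rw [flowComp_eq, ablock p a n hpi A hAsub (0,0,0) (by simp) (by simp)]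
      simp [hu]
    have h2 : fstep p (0, u, u) 0 = (t, max u t + t, max u t + s) := by
      simp only [fstep, hp0.1, hp0.2.1, hp0.2.2]
      have e1 : (0 : ℕ) + t = t := by omega
      have e3 : max u (max u t + t) + (s - t) = max u t + s := by omega
      rw [e1, e3]
    have h3 : C3 p (A ++ 0 :: B) = max (max u t + s) (max u t + t + v) := by
      unfold C3
      rw [flowComp_eq, List.foldl_append, List.foldl_cons, ← flowComp_eq, h1, h2,
        ablock p a n hpi B hBsub (t, max u t + t, max u t + s) (by dsimp only; omega) (by dsimp only; omega)]
    rw [h3] at hC3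
    have hut : u = t := by omega
    refine ⟨A.toFinset, ?_, ?_⟩
    · intro x hx
      exact hAsub x (List.mem_toFinset.mp hx)
    · rw [List.sum_toFinset a hndA]; omega
end
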